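/- For all adjacent vertices x and y of G, every natural number t and every vertex z, the coordinate r_t(x,y)(z) is non-negative. -/

import Mathlib

open scoped Classical

/-- `Φ⁻ₓ`: apply the reflection at every vertex at odd distance from `x`. -/
noncomputable def phiOdd {V : Type*} (G : SimpleGraph V) (x : V) (a : V → ℤ) : V → ℤ :=
  fun z => if Odd (G.dist x z) then -a z + ∑ᶠ w ∈ G.neighborSet z, a w else a z

/-- `Φ⁺ₓ`: apply the reflection at every vertex at even distance from `x`. -/
noncomputable def phiEven {V : Type*} (G : SimpleGraph V) (x : V) (a : V → ℤ) : V → ℤ :=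
  fun z => if Even (G.dist x z) then -a z + ∑ᶠ w ∈ G.neighborSet z, a w else a z

/-- The Fibonacci vectors `s_t(x)`: `s_0(x) = δ_x`, `s_{t+1}(x) = Φ⁻ₓ s_t(x)` for even `t`
and `s_{t+1}(x) = Φ⁺ₓ s_t(x)` for odd `t`. -/
noncomputable def sVec {V : Type*} (G : SimpleGraph V) (x : V) : ℕ → V → ℤ
  | 0 => fun z => if z = x then 1 else 0
  | t + 1 => if Even t then phiOdd G x (sVec G x t) else phiEven G x (sVec G x t)

/-- The Fibonacci vectors `r_t(x,y)`: `r_0(x,y) = δ_x + δ_y`, `r_{t+1}(x,y) = Φ⁻ₓ r_t(x,y)`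
for even `t` and `r_{t+1}(x,y) = Φ⁺ₓ r_t(x,y)` for odd `t`. -/
noncomputable def rVec {V : Type*} (G : SimpleGraph V) (x y : V) : ℕ → V → ℤ
  | 0 => fun z => (if z = x then 1 else 0) + (if z = y then 1 else 0)
  | t + 1 => if Even t then phiOdd G x (rVec G x y t) else phiEven G x (rVec G x y t)


namespace TreeGeo

variable {V : Type*} {G : SimpleGraph V}




/-- Every vertex ≠ r has a neighbour strictly closer to r. -/
lemma parent_exists (hconn : G.Connected) (r z : V) (hz : z ≠ r) :
    ∃ w, G.Adj z w ∧ G.dist r w + 1 = G.dist r z := by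
  obtain ⟨p, hp, hlen⟩ := hconn.exists_path_of_dist z r
  have hne : G.dist z r ≠ 0 := by
    rw [SimpleGraph.dist_ne_zero_iff_ne_and_reachable]
    exact ⟨hz, hconn.preconnected z r⟩
  cases p with
  | nil => simp at hne
  | @cons _ w _ h q =>
    refine ⟨w, h, ?_⟩
    have h1 : G.dist r w ≤ q.length := by
      have := SimpleGraph.dist_le q.reverse
      simpa [SimpleGraph.dist_comm] using this
    have h2 : G.dist r z ≤ G.dist r w + 1 := by
      calc G.dist r z ≤ G.dist r w + G.dist w z := hconn.dist_triangle
        _ = G.dist r w + 1 := by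
            rw [SimpleGraph.dist_comm (u := w)]
            rw [SimpleGraph.dist_eq_one_iff_adj.2 h]
    have h3 : q.length + 1 = G.dist r z := by
      simpa [SimpleGraph.dist_comm] using hlen
    omega

/-- In an acyclic connected graph no two adjacent vertices are equidistant from r. -/
lemma adj_dist_ne (hconn : G.Connected) (hacyc : G.IsAcyclic) (r : V) {u v : V}
    (h : G.Adj u v) : G.dist r u ≠ G.dist r v := by
  intro heq
  obtain ⟨p, hp, hplen⟩ := hconn.exists_path_of_dist r u
  obtain ⟨q, hq, hqlen⟩ := hconn.exists_path_of_dist r v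
  have hvp : v ∉ p.support := by
    intro hv
    have h1 : (p.takeUntil v hv).length + (p.dropUntil v hv).length = p.length := by
      conv_rhs => rw [← p.take_spec hv]
      rw [SimpleGraph.Walk.length_append]
    have h2 : G.dist r v ≤ (p.takeUntil v hv).length := SimpleGraph.dist_le _
    have h3 : (p.dropUntil v hv).length ≠ 0 := by
      intro h0
      exact h.ne' (SimpleGraph.Walk.eq_of_length_eq_zero h0)
    omega
  have hpath : (p.concat h).IsPath := by
    rw [SimpleGraph.Walk.isPath_def, SimpleGraph.Walk.support_concat]
    rw [SimpleGraph.Walk.isPath_def] at hp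
    simp [List.concat_eq_append, List.nodup_append, hp, hvp]
    intro a ha hav; exact hvp (hav ▸ ha)
  have := hacyc.path_unique ⟨p.concat h, hpath⟩ ⟨q, hq⟩
  have hlen : (p.concat h).length = q.length := by
    have : (⟨p.concat h, hpath⟩ : G.Path r v).1.length = (⟨q, hq⟩ : G.Path r v).1.length := by
      rw [this]
    simpa using this
  rw [SimpleGraph.Walk.length_concat] at hlen
  omega

lemma adj_dist_cases (hconn : G.Connected) (hacyc : G.IsAcyclic) (r : V) {u v : V}
    (h : G.Adj u v) : G.dist r v = G.dist r u + 1 ∨ G.dist r v + 1 = G.dist r u := by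
  have h1 : G.dist r v ≤ G.dist r u + 1 := by
    calc G.dist r v ≤ G.dist r u + G.dist u v := hconn.dist_triangle
      _ = G.dist r u + 1 := by rw [SimpleGraph.dist_eq_one_iff_adj.2 h]
  have h2 : G.dist r u ≤ G.dist r v + 1 := by
    calc G.dist r u ≤ G.dist r v + G.dist v u := hconn.dist_triangle
      _ = G.dist r v + 1 := by rw [SimpleGraph.dist_eq_one_iff_adj.2 h.symm]
  have h3 := adj_dist_ne hconn hacyc r h
  omega

/-- Uniqueness of the parent. -/
lemma parent_unique (hconn : G.Connected) (hacyc : G.IsAcyclic) (r z : V) {w₁ w₂ : V}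
    (h₁ : G.Adj z w₁) (hd₁ : G.dist r w₁ + 1 = G.dist r z)
    (h₂ : G.Adj z w₂) (hd₂ : G.dist r w₂ + 1 = G.dist r z) : w₁ = w₂ := by
  obtain ⟨p₁, hp₁, hl₁⟩ := hconn.exists_path_of_dist r w₁
  obtain ⟨p₂, hp₂, hl₂⟩ := hconn.exists_path_of_dist r w₂
  have hz₁ : z ∉ p₁.support := by
    intro hv
    have h2 : G.dist r z ≤ (p₁.takeUntil z hv).length := SimpleGraph.dist_le _
    have h3 := SimpleGraph.Walk.length_takeUntil_le p₁ hv
    omega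
  have hz₂ : z ∉ p₂.support := by
    intro hv
    have h2 : G.dist r z ≤ (p₂.takeUntil z hv).length := SimpleGraph.dist_le _
    have h3 := SimpleGraph.Walk.length_takeUntil_le p₂ hv
    omega
  have hpath₁ : (p₁.concat h₁.symm).IsPath := by
    rw [SimpleGraph.Walk.isPath_def, SimpleGraph.Walk.support_concat]
    rw [SimpleGraph.Walk.isPath_def] at hp₁
    simp [List.concat_eq_append, List.nodup_append, hp₁, hz₁]
    intro a ha hav; exact hz₁ (hav ▸ ha)
  have hpath₂ : (p₂.concat h₂.symm).IsPath := by
    rw [SimpleGraph.Walk.isPath_def, SimpleGraph.Walk.support_concat]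
    rw [SimpleGraph.Walk.isPath_def] at hp₂
    simp [List.concat_eq_append, List.nodup_append, hp₂, hz₂]
    intro a ha hav; exact hz₂ (hav ▸ ha)
  have heq := hacyc.path_unique ⟨p₁.concat h₁.symm, hpath₁⟩ ⟨p₂.concat h₂.symm, hpath₂⟩
  have heqw : p₁.concat h₁.symm = p₂.concat h₂.symm := by
    simpa using congrArg Subtype.val heq
  obtain ⟨hv, -⟩ := SimpleGraph.Walk.concat_inj heqw
  exact hv



/-- Model of the dynamics in coordinates `(dist x z, dist y z)`. -/
def fMod : ℕ → ℕ → ℕ → ℤ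
  | 0, dx, dy => (if dx = 0 then 1 else 0) + (if dy = 0 then 1 else 0)
  | t + 1, dx, dy =>
    if dx % 2 = (t + 1) % 2 then
      -fMod t dx dy +
        (if dx = 0 then fMod t 1 0 + 2 * fMod t 1 2
         else if dy = 0 then fMod t 0 1 + 2 * fMod t 2 1
         else fMod t (dx - 1) (dy - 1) + 2 * fMod t (dx + 1) (dy + 1))
    else fMod t dx dy

def Valid (dx dy : ℕ) : Prop := dy = dx + 1 ∨ dx = dy + 1

lemma fMod_succ_not {t dx dy : ℕ} (h : dx % 2 ≠ (t + 1) % 2) :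
    fMod (t + 1) dx dy = fMod t dx dy := by
  rw [fMod, if_neg h]

lemma fMod_succ_zero {t dy : ℕ} (h : t % 2 = 1) :
    fMod (t + 1) 0 dy = -fMod t 0 dy + (fMod t 1 0 + 2 * fMod t 1 2) := by
  rw [fMod, if_pos (by omega), if_pos rfl]

lemma fMod_succ_y {t : ℕ} (h : t % 2 = 0) :
    fMod (t + 1) 1 0 = -fMod t 1 0 + (fMod t 0 1 + 2 * fMod t 2 1) := by
  rw [fMod, if_pos (by omega)]
  norm_num

lemma fMod_succ_gen {t dx dy : ℕ} (h : dx % 2 = (t + 1) % 2) (hdx : 1 ≤ dx) (hdy : 1 ≤ dy) :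
    fMod (t + 1) dx dy =
      -fMod t dx dy + (fMod t (dx - 1) (dy - 1) + 2 * fMod t (dx + 1) (dy + 1)) := by
  rw [fMod, if_pos h, if_neg (by omega), if_neg (by omega)]

/-- The inductive invariant. -/
def Inv (t : ℕ) : Prop :=
  (∀ dx dy, Valid dx dy → 0 ≤ fMod t dx dy) ∧
  (∀ dx dy, Valid dx dy → 2 ≤ dx → dx % 2 = (t + 1) % 2 →
      2 * fMod t dx dy ≤ fMod t (dx - 1) (dy - 1)) ∧
  (t % 2 = 0 → fMod t 1 0 ≤ fMod t 0 1 ∧ fMod t 1 2 ≤ fMod t 0 1 ∧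
      fMod t 1 2 ≤ 2 * fMod t 2 3) ∧
  (t % 2 = 1 → fMod t 0 1 ≤ fMod t 1 0 + fMod t 1 2 ∧ fMod t 0 1 ≤ 2 * fMod t 1 2)

lemma inv_zero : Inv 0 := by
  refine ⟨?_, ?_, ?_, ?_⟩
  · intro dx dy hv
    simp only [fMod]
    split <;> split <;> omega
  · intro dx dy hv h2 hp
    have h1 : fMod 0 dx dy = 0 := by
      simp only [fMod]
      rw [if_neg (by omega), if_neg (by rcases hv with h | h <;> omega)]
      norm_num
    have h3 : (0:ℤ) ≤ fMod 0 (dx - 1) (dy - 1) := by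
      simp only [fMod]; split <;> split <;> omega
    omega
  · intro _
    refine ⟨by simp [fMod], by simp [fMod], by simp [fMod]⟩
  · intro h; omega

lemma inv_succ {t : ℕ} (ih : Inv t) : Inv (t + 1) := by
  obtain ⟨i1, i2, i2x, i34⟩ := ih
  have hv01 : Valid 0 1 := Or.inl rfl
  have hv10 : Valid 1 0 := Or.inr rfl
  have hv12 : Valid 1 2 := Or.inl rfl
  have hv21 : Valid 2 1 := Or.inr rfl
  have hv23 : Valid 2 3 := Or.inl rfl
  have hv34 : Valid 3 4 := Or.inl rfl
  refine ⟨?_, ?_, ?_, ?_⟩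
  · -- nonnegativity
    intro dx dy hv
    by_cases hp : dx % 2 = (t + 1) % 2
    · rcases Nat.eq_zero_or_pos dx with h0 | h0
      · subst h0
        have hdy : dy = 1 := by rcases hv with h | h <;> omega
        subst hdy
        have ht : t % 2 = 1 := by omega
        rw [fMod_succ_zero ht]
        obtain ⟨h3, h4⟩ := i34 ht
        have := i1 1 2 hv12
        omega
      · rcases Nat.eq_zero_or_pos dy with hy0 | hy0
        · have hdx : dx = 1 := by rcases hv with h | h <;> omega
          subst hdx; rw [hy0] at *
          have ht : t % 2 = 0 := by omega
          rw [fMod_succ_y ht]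
          obtain ⟨ha, hb, hc⟩ := i2x ht
          have := i1 2 1 hv21
          omega
        · rw [fMod_succ_gen hp h0 hy0]
          rcases Nat.lt_or_ge dx 2 with h2 | h2
          · -- dx = 1, dy = 2
            have hdx : dx = 1 := by omega
            have hdy : dy = 2 := by rcases hv with h | h <;> omega
            subst hdx; subst hdy
            have ht : t % 2 = 0 := by omega
            obtain ⟨ha, hb, hc⟩ := i2x ht
            have := i1 2 3 hv23
            norm_num
            omega
          · have hpar : 2 * fMod t dx dy ≤ fMod t (dx - 1) (dy - 1) := i2 dx dy hv h2 hp
            have hch : 0 ≤ fMod t (dx + 1) (dy + 1) := by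
              apply i1; rcases hv with h | h
              · exact Or.inl (by omega)
              · exact Or.inr (by omega)
            have hself : 0 ≤ fMod t dx dy := i1 dx dy hv
            omega
    · rw [fMod_succ_not hp]; exact i1 dx dy hv
  · -- the factor-2 parent inequality
    intro dx dy hv h2 hp
    have hp' : dx % 2 ≠ (t + 1) % 2 := by omega
    rw [fMod_succ_not hp']
    have hpp : (dx - 1) % 2 = (t + 1) % 2 := by omega
    have hvq : Valid (dx - 1) (dy - 1) := by
      rcases hv with h | h
      · exact Or.inl (by omega)
      · exact Or.inr (by omega)
    rcases Nat.lt_or_ge dx 3 with h3 | h3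
    · -- dx = 2
      have hdx : dx = 2 := by omega
      subst hdx
      have ht : t % 2 = 0 := by omega
      obtain ⟨ha, hb, hc⟩ := i2x ht
      rcases hv with h | h
      · -- dy = 3, parent (1,2)
        have hdy : dy = 3 := by omega
        subst hdy
        have he : fMod (t + 1) 1 2 = -fMod t 1 2 + (fMod t 0 1 + 2 * fMod t 2 3) := by
          rw [fMod_succ_gen (show 1 % 2 = (t+1) % 2 by omega) le_rfl (by omega)]
        simp only [show (2:ℕ) - 1 = 1 from rfl, show (3:ℕ) - 1 = 2 from rfl]
        rw [he]
        have := i1 2 3 hv23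
        omega
      · -- dy = 1, parent (1,0)
        have hdy : dy = 1 := by omega
        subst hdy
        simp only [show (2:ℕ) - 1 = 1 from rfl, show (1:ℕ) - 1 = 0 from rfl]
        rw [fMod_succ_y ht]
        have := i1 2 1 hv21
        omega
    · -- dx ≥ 3 : generic parent
      have : fMod (t + 1) (dx - 1) (dy - 1) =
          -fMod t (dx - 1) (dy - 1) +
            (fMod t (dx - 1 - 1) (dy - 1 - 1) + 2 * fMod t (dx - 1 + 1) (dy - 1 + 1)) := by
        apply fMod_succ_gen hpp (by omega)
        rcases hv with h | h <;> omega
      rw [this]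
      have hdx1 : dx - 1 + 1 = dx := by omega
      have hdy1 : dy - 1 + 1 = dy := by
        rcases hv with h | h <;> omega
      rw [hdx1, hdy1]
      have hq2 := i2 (dx - 1) (dy - 1) hvq (by omega) hpp
      have hq0 := i1 (dx - 1) (dy - 1) hvq
      have hp0 := i1 dx dy hv
      omega
  · -- i2x at t+1 : t+1 even, t odd
    intro ht1
    have ht : t % 2 = 1 := by omega
    obtain ⟨h3, h4⟩ := i34 ht
    have e0 : fMod (t + 1) 0 1 = -fMod t 0 1 + (fMod t 1 0 + 2 * fMod t 1 2) :=
      fMod_succ_zero ht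
    have e10 : fMod (t + 1) 1 0 = fMod t 1 0 := fMod_succ_not (by omega)
    have e12 : fMod (t + 1) 1 2 = fMod t 1 2 := fMod_succ_not (by omega)
    have e23 : fMod (t + 1) 2 3 = -fMod t 2 3 + (fMod t 1 2 + 2 * fMod t 3 4) := by
      rw [fMod_succ_gen (show 2 % 2 = (t+1) % 2 by omega) (by omega) (by omega)]
    have hq2 := i2 2 3 hv23 le_rfl (by omega)
    simp only [show (2:ℕ) - 1 = 1 from rfl, show (3:ℕ) - 1 = 2 from rfl] at hq2
    have h34 := i1 3 4 hv34
    rw [e0, e10, e12, e23]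
    refine ⟨by omega, by omega, by omega⟩
  · -- i34 at t+1 : t+1 odd, t even
    intro ht1
    have ht : t % 2 = 0 := by omega
    obtain ⟨ha, hb, hc⟩ := i2x ht
    have e0 : fMod (t + 1) 0 1 = fMod t 0 1 := fMod_succ_not (by omega)
    have e10 : fMod (t + 1) 1 0 = -fMod t 1 0 + (fMod t 0 1 + 2 * fMod t 2 1) :=
      fMod_succ_y ht
    have e12 : fMod (t + 1) 1 2 = -fMod t 1 2 + (fMod t 0 1 + 2 * fMod t 2 3) := by
      rw [fMod_succ_gen (show 1 % 2 = (t+1) % 2 by omega) le_rfl (by omega)]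
    have h21 := i1 2 1 hv21
    have h23 := i1 2 3 hv23
    have h01 := i1 0 1 hv01
    rw [e0, e10, e12]
    constructor <;> omega
  
lemma inv_all (t : ℕ) : Inv t := by
  induction t with
  | zero => exact inv_zero
  | succ t ih => exact inv_succ ih

lemma fMod_nonneg {t dx dy : ℕ} (hv : Valid dx dy) : 0 ≤ fMod t dx dy :=
  (inv_all t).1 dx dy hv

lemma dist_eq_zero (hconn : G.Connected) (u v : V) : G.dist u v = 0 ↔ u = v := by
  rw [SimpleGraph.dist_eq_zero_iff_eq_or_not_reachable]
  simp [hconn.preconnected u v]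

/-- On the side of `a` (w.r.t. the edge `ab`), the local structure of neighbourhoods. -/
lemma sideStruct (hconn : G.Connected) (hacyc : G.IsAcyclic) {a b : V} (hab : G.Adj a b)
    (z : V) (hza : z ≠ a) (hside : G.dist b z = G.dist a z + 1) :
    ∃ w₀, G.Adj z w₀ ∧ G.dist a w₀ + 1 = G.dist a z ∧ G.dist b w₀ + 1 = G.dist b z ∧
      ∀ w, G.Adj z w → w ≠ w₀ →
        G.dist a w = G.dist a z + 1 ∧ G.dist b w = G.dist b z + 1 := by
  obtain ⟨w₀, hw₀, hd₀⟩ := parent_exists hconn a z hza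
  have pair : ∀ u : V, G.dist u b = G.dist u a + 1 ∨ G.dist u b + 1 = G.dist u a := by
    intro u; exact adj_dist_cases hconn hacyc u hab
  have hb₀ : G.dist b w₀ + 1 = G.dist b z := by
    have h1 := pair w₀
    have h2 : G.dist b z ≤ G.dist b w₀ + 1 := by
      calc G.dist b z ≤ G.dist b w₀ + G.dist w₀ z := hconn.dist_triangle
        _ = G.dist b w₀ + 1 := by
            rw [SimpleGraph.dist_comm (u := w₀), SimpleGraph.dist_eq_one_iff_adj.2 hw₀]
    rw [SimpleGraph.dist_comm (u := w₀) (v := b), SimpleGraph.dist_comm (u := w₀) (v := a)]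
      at h1
    omega
  refine ⟨w₀, hw₀, hd₀, hb₀, ?_⟩
  intro w hw hne
  have hda : G.dist a w = G.dist a z + 1 := by
    rcases adj_dist_cases hconn hacyc a hw with h | h
    · exact h
    · exact absurd (parent_unique hconn hacyc a z hw h hw₀ hd₀) hne
  refine ⟨hda, ?_⟩
  have h1 := pair w
  rw [SimpleGraph.dist_comm (u := w) (v := b), SimpleGraph.dist_comm (u := w) (v := a)] at h1
  have h2 : G.dist b z ≤ G.dist b w + 1 := by
    calc G.dist b z ≤ G.dist b w + G.dist w z := hconn.dist_triangle
      _ = G.dist b w + 1 := by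
          rw [SimpleGraph.dist_comm (u := w), SimpleGraph.dist_eq_one_iff_adj.2 hw]
  have hdz : G.dist a z ≠ 0 := fun hh => hza ((dist_eq_zero hconn a z).1 hh).symm
  rcases h1 with h1 | h1
  · omega
  · -- bad case : dist b w = dist a z ; derive a contradiction
    exfalso
    have hbw : G.dist b w = G.dist a z := by omega
    have hwb : w ≠ b := fun hh => by
      subst hh; rw [SimpleGraph.dist_self] at hbw; omega
    obtain ⟨w', hw', hd'⟩ := parent_exists hconn b w hwb
    have h3 := pair w'
    rw [SimpleGraph.dist_comm (u := w') (v := b), SimpleGraph.dist_comm (u := w') (v := a)]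
      at h3
    have h4 : G.dist a w ≤ G.dist a w' + 1 := by
      calc G.dist a w ≤ G.dist a w' + G.dist w' w := hconn.dist_triangle
        _ = G.dist a w' + 1 := by
            rw [SimpleGraph.dist_comm (u := w') (v := w), SimpleGraph.dist_eq_one_iff_adj.2 hw']
    have h5 : G.dist a w' + 1 = G.dist a w := by omega
    have h6 : G.dist a z + 1 = G.dist a w := by omega
    have := parent_unique hconn hacyc a w hw.symm h6 hw' h5
    -- so w' = z, but dist b w' = dist a z - 1 while dist b z = dist a z + 1
    subst this
    omega


lemma nbr_finite (hreg : ∀ v : V, (G.neighborSet v).ncard = 3) (z : V) :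
    (G.neighborSet z).Finite := by
  by_contra h
  have hinf : (G.neighborSet z).Infinite := h
  have := hinf.ncard
  rw [hreg z] at this
  omega

lemma sum_three (hreg : ∀ v : V, (G.neighborSet v).ncard = 3) (z p : V) (hp : G.Adj z p)
    (a : V → ℤ) (c : ℤ) (hc : ∀ w, G.Adj z w → w ≠ p → a w = c) :
    ∑ᶠ w ∈ G.neighborSet z, a w = a p + 2 * c := by
  have hfin := nbr_finite hreg z
  rw [← hfin.coe_toFinset, finsum_mem_coe_finset]
  have hpm : p ∈ hfin.toFinset := by
    rw [Set.Finite.mem_toFinset]; exact hp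
  rw [← Finset.add_sum_erase _ a hpm]
  have hcard : (hfin.toFinset.erase p).card = 2 := by
    rw [Finset.card_erase_of_mem hpm]
    have := hreg z
    rw [Set.ncard_eq_toFinset_card _ hfin] at this
    omega
  have : ∑ w ∈ hfin.toFinset.erase p, a w = ∑ w ∈ hfin.toFinset.erase p, c := by
    apply Finset.sum_congr rfl
    intro w hw
    rw [Finset.mem_erase, Set.Finite.mem_toFinset] at hw
    exact hc w hw.2 hw.1
  rw [this, Finset.sum_const, hcard]
  ring

section Bridge
variable (hconn : G.Connected) (hacyc : G.IsAcyclic)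
  (hreg : ∀ v : V, (G.neighborSet v).ncard = 3) {x y : V} (hxy : G.Adj x y)

include hconn hacyc hreg hxy

lemma sum_eval (t : ℕ) (z : V)
    (ih : ∀ w, rVec G x y t w = fMod t (G.dist x w) (G.dist y w)) :
    ∑ᶠ w ∈ G.neighborSet z, rVec G x y t w =
      if G.dist x z = 0 then fMod t 1 0 + 2 * fMod t 1 2
      else if G.dist y z = 0 then fMod t 0 1 + 2 * fMod t 2 1
      else fMod t (G.dist x z - 1) (G.dist y z - 1) +
        2 * fMod t (G.dist x z + 1) (G.dist y z + 1) := by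
  have hdyx : G.dist y x = 1 := SimpleGraph.dist_eq_one_iff_adj.2 hxy.symm
  have hdxy : G.dist x y = 1 := SimpleGraph.dist_eq_one_iff_adj.2 hxy
  by_cases hzx : z = x
  · subst hzx
    rw [if_pos (by rw [SimpleGraph.dist_self])]
    rw [sum_three hreg z y hxy _ (fMod t 1 2) ?_]
    · rw [ih y, hdxy, SimpleGraph.dist_self]
    · intro w hw hne
      rw [ih w]
      have h1 : G.dist z w = 1 := SimpleGraph.dist_eq_one_iff_adj.2 hw
      have h2 : G.dist y w = 2 := by
        rcases adj_dist_cases hconn hacyc y hw with h | h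
        · omega
        · exfalso
          have : G.dist y w = 0 := by omega
          exact hne ((dist_eq_zero hconn y w).1 this).symm
      rw [h1, h2]
  · by_cases hzy : z = y
    · subst hzy
      rw [if_neg (fun h => hzx ((dist_eq_zero hconn x z).1 h).symm),
        if_pos (by rw [SimpleGraph.dist_self])]
      rw [sum_three hreg z x hxy.symm _ (fMod t 2 1) ?_]
      · rw [ih x, hdyx, SimpleGraph.dist_self]
      · intro w hw hne
        rw [ih w]
        have h1 : G.dist z w = 1 := SimpleGraph.dist_eq_one_iff_adj.2 hw
        have h2 : G.dist x w = 2 := by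
          rcases adj_dist_cases hconn hacyc x hw with h | h
          · omega
          · exfalso
            have : G.dist x w = 0 := by omega
            exact hne ((dist_eq_zero hconn x w).1 this).symm
        rw [h1, h2]
    · have hdx0 : G.dist x z ≠ 0 := fun h => hzx ((dist_eq_zero hconn x z).1 h).symm
      have hdy0 : G.dist y z ≠ 0 := fun h => hzy ((dist_eq_zero hconn y z).1 h).symm
      rw [if_neg hdx0, if_neg hdy0]
      have hval : G.dist y z = G.dist x z + 1 ∨ G.dist x z = G.dist y z + 1 := by
        rcases adj_dist_cases hconn hacyc z hxy with h | h
        · left; rw [SimpleGraph.dist_comm (u := y), SimpleGraph.dist_comm (u := x)]; omega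
        · right; rw [SimpleGraph.dist_comm (u := y), SimpleGraph.dist_comm (u := x)]; omega
      rcases hval with hside | hside
      · obtain ⟨w₀, hw₀, ha₀, hb₀, hoth⟩ := sideStruct hconn hacyc hxy z hzx hside
        rw [sum_three hreg z w₀ hw₀ _ (fMod t (G.dist x z + 1) (G.dist y z + 1)) ?_]
        · rw [ih w₀]
          have e1 : G.dist x w₀ = G.dist x z - 1 := by omega
          have e2 : G.dist y w₀ = G.dist y z - 1 := by omega
          rw [e1, e2]
        · intro w hw hne
          obtain ⟨h1, h2⟩ := hoth w hw hne
          rw [ih w, h1, h2]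
      · obtain ⟨w₀, hw₀, ha₀, hb₀, hoth⟩ := sideStruct hconn hacyc hxy.symm z hzy hside
        rw [sum_three hreg z w₀ hw₀ _ (fMod t (G.dist x z + 1) (G.dist y z + 1)) ?_]
        · rw [ih w₀]
          have e1 : G.dist x w₀ = G.dist x z - 1 := by omega
          have e2 : G.dist y w₀ = G.dist y z - 1 := by omega
          rw [e1, e2]
        · intro w hw hne
          obtain ⟨h1, h2⟩ := hoth w hw hne
          rw [ih w, h1, h2]

lemma bridge (t : ℕ) : ∀ z, rVec G x y t z = fMod t (G.dist x z) (G.dist y z) := by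
  induction t with
  | zero =>
    intro z
    have h1 : (G.dist x z = 0) ↔ z = x := by rw [dist_eq_zero hconn]; exact eq_comm
    have h2 : (G.dist y z = 0) ↔ z = y := by rw [dist_eq_zero hconn]; exact eq_comm
    show (if z = x then (1:ℤ) else 0) + (if z = y then 1 else 0) = _
    rw [fMod]
    simp only [h1, h2]
  | succ t ih =>
    intro z
    have hsum := sum_eval hconn hacyc hreg hxy t z ih
    rcases Nat.even_or_odd t with hpar | hpar
    · show (if Even t then phiOdd G x (rVec G x y t) else phiEven G x (rVec G x y t)) z
        = fMod (t + 1) (G.dist x z) (G.dist y z)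
      rw [if_pos hpar]
      show (if Odd (G.dist x z) then -rVec G x y t z + ∑ᶠ w ∈ G.neighborSet z, rVec G x y t w
        else rVec G x y t z) = _
      rw [fMod]
      have hmod : ((t + 1) % 2) = 1 := by
        have := Nat.even_iff.mp hpar; omega
      by_cases hodd : Odd (G.dist x z)
      · rw [if_pos hodd, if_pos (by rw [hmod]; exact Nat.odd_iff.mp hodd)]
        rw [ih z, hsum]
      · rw [if_neg hodd, if_neg (by rw [hmod]; intro h; exact hodd (Nat.odd_iff.mpr h))]
        exact ih z
    · show (if Even t then phiOdd G x (rVec G x y t) else phiEven G x (rVec G x y t)) z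
        = fMod (t + 1) (G.dist x z) (G.dist y z)
      rw [if_neg (Nat.not_even_iff_odd.mpr hpar)]
      show (if Even (G.dist x z) then -rVec G x y t z + ∑ᶠ w ∈ G.neighborSet z, rVec G x y t w
        else rVec G x y t z) = _
      rw [fMod]
      have hmod : ((t + 1) % 2) = 0 := by
        have := Nat.odd_iff.mp hpar; omega
      by_cases hev : Even (G.dist x z)
      · rw [if_pos hev, if_pos (by rw [hmod]; exact Nat.even_iff.mp hev)]
        rw [ih z, hsum]
      · rw [if_neg hev, if_neg (by rw [hmod]; intro h; exact hev (Nat.even_iff.mpr h))]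
        exact ih z

end Bridge
end TreeGeo

/-- The coordinates of the Fibonacci vector `r_t(x,y)` are non-negative. -/
theorem rVec_nonneg (V : Type*) (G : SimpleGraph V) (hconn : G.Connected)
    (hacyc : G.IsAcyclic) (hreg : ∀ v : V, (G.neighborSet v).ncard = 3)
    (x y : V) (hxy : G.Adj x y) (t : ℕ) (z : V) :
    0 ≤ rVec G x y t z := by
  rw [TreeGeo.bridge hconn hacyc hreg hxy t z]
  apply TreeGeo.fMod_nonneg
  rcases TreeGeo.adj_dist_cases hconn hacyc z hxy with h | h
  · left; rw [SimpleGraph.dist_comm (u := x), SimpleGraph.dist_comm (u := y)]; omega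
  · right; rw [SimpleGraph.dist_comm (u := x), SimpleGraph.dist_comm (u := y)]; omega
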